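/- Let A,B be real numbers with B≠0, let f,ψ ∈ L²(ℝ), and let γ ∈ ℝ, t ∈ ℝ, ζ > 0. Then the NSAWT satisfies the translation covariance A_ψ[ f(· − γ) ](t,ζ) = exp{ −iAγ(t−γ)/B } · A_ψ[ y ↦ exp{ iAyγ/B } f(y) ](t−γ, ζ). -/

import Mathlib

open MeasureTheory Real Set


/-- The analyzing window of the novel special affine wavelet transform. -/
noncomputable def waveWindow (A B : ℝ) (ψ : ℝ → ℂ) (t ζ : ℝ) (x : ℝ) : ℂ :=
  ((Real.sqrt (2 * Real.pi * |B|))⁻¹ * (Real.sqrt ζ)⁻¹ : ℝ) *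
    ψ ((x - t) / ζ) *
    Complex.exp (Complex.I * (A : ℂ) * (x : ℂ) * ((t : ℂ) - (x : ℂ)) / (B : ℂ))

/-- The novel special affine wavelet transform (NSAWT). -/
noncomputable def NSAWT (A B : ℝ) (ψ : ℝ → ℂ) (f : ℝ → ℂ) (t ζ : ℝ) : ℂ :=
  ∫ x : ℝ, f x * (starRingEnd ℂ) (waveWindow A B ψ t ζ x)

/-- Translation covariance of the NSAWT. -/
theorem nsawt_translation (A B : ℝ) (hB : B ≠ 0)
    (f ψ : ℝ → ℂ) (hf : MemLp f 2) (hψ : MemLp ψ 2)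
    (γ t ζ : ℝ) (hζ : 0 < ζ) :
    NSAWT A B ψ (fun x : ℝ => f (x - γ)) t ζ
      = Complex.exp (-(Complex.I * (A : ℂ) * (γ : ℂ) * ((t : ℂ) - (γ : ℂ))) / (B : ℂ)) *
        NSAWT A B ψ (fun y : ℝ => Complex.exp (Complex.I * (A : ℂ) * (y : ℂ) * (γ : ℂ) / (B : ℂ)) * f y)
          (t - γ) ζ := by
  have hB' : (B : ℂ) ≠ 0 := by exact_mod_cast hB
  unfold NSAWT
  have h1 : (∫ x : ℝ, f (x - γ) * (starRingEnd ℂ) (waveWindow A B ψ t ζ x))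
      = ∫ y : ℝ, f y * (starRingEnd ℂ) (waveWindow A B ψ t ζ (y + γ)) := by
    rw [← integral_add_right_eq_self
      (fun x => f (x - γ) * (starRingEnd ℂ) (waveWindow A B ψ t ζ x)) γ]
    simp
  rw [h1, ← integral_const_mul]
  refine integral_congr_ae (Filter.Eventually.of_forall fun y => ?_)
  simp only []
  unfold waveWindow
  have harg : (y + γ - t) / ζ = (y - (t - γ)) / ζ := by ring
  rw [harg]
  simp only [map_mul, ← Complex.exp_conj, map_div₀, Complex.conj_I, map_mul, map_sub, map_add,
    Complex.conj_ofReal, Complex.ofReal_add, Complex.ofReal_sub]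
  have hexp : (-Complex.I * (A:ℂ) * ((y:ℂ) + (γ:ℂ)) * ((t:ℂ) - ((y:ℂ) + (γ:ℂ))) / (B:ℂ))
      = (-(Complex.I * (A:ℂ) * (γ:ℂ) * ((t:ℂ) - (γ:ℂ))) / (B:ℂ))
        + (Complex.I * (A:ℂ) * (y:ℂ) * (γ:ℂ) / (B:ℂ))
        + (-Complex.I * (A:ℂ) * (y:ℂ) * (((t:ℂ) - (γ:ℂ)) - (y:ℂ)) / (B:ℂ)) := by
    field_simp
    ring
  rw [hexp, Complex.exp_add, Complex.exp_add]
  ring
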